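/- Let θ be a collineation of PG(n,K) (n ≥ 2, K a skew field) such that no incident point-hyperplane pair is mapped to a special one, where pairs (p,H) and (p',H') with p∈H, p'∈H' are special if exactly one of the two incidences p ∈ H', p' ∈ H holds. Then for every point p with p ≠ p^θ, the line through p and p^θ is stabilised by θ, i.e., p^{θ²} lies on the line p p^θ. -/

import Mathlib

/-- Points of the projective space `PG(n,K)`: `1`-dimensional subspaces of `K^{n+1}`,
modelled by the projectivization of the vector space `Fin (n+1) → K` over the
(possibly skew) field `K`. -/
abbrev PGPoint (n : ℕ) (K : Type) [DivisionRing K] : Type :=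
  Projectivization K (Fin (n + 1) → K)

/-- Hyperplanes of `PG(n,K)`: `n`-dimensional subspaces of `K^{n+1}`. -/
def PGHyp (n : ℕ) (K : Type) [DivisionRing K] : Type :=
  {W : Submodule K (Fin (n + 1) → K) // Module.finrank K W = n}

/-- Lines of `PG(n,K)`: `2`-dimensional subspaces of `K^{n+1}`. -/
def PGLine (n : ℕ) (K : Type) [DivisionRing K] : Type :=
  {W : Submodule K (Fin (n + 1) → K) // Module.finrank K W = 2}

/-- Incidence between a point and a hyperplane of `PG(n,K)`. -/
def PGIncid {n : ℕ} {K : Type} [DivisionRing K] (p : PGPoint n K) (H : PGHyp n K) : Prop :=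
  p.submodule ≤ H.1

/-- Two incident point-hyperplane flags `(p,H)`, `(p',H')` are *adjacent* (distance 1
in the long root subgroup geometry of type `A_n`) if they are distinct and share
either the point or the hyperplane. -/
def FlagAdj {n : ℕ} {K : Type} [DivisionRing K]
    (p p' : PGPoint n K) (H H' : PGHyp n K) : Prop :=
  (p ≠ p' ∨ H ≠ H') ∧ (p = p' ∨ H = H')

/-- Two flags `(p,H)`, `(p',H')` are *special* (distance 2') if exactly one of the
cross-incidences `p ∈ H'`, `p' ∈ H` holds. -/
def FlagSpecial {n : ℕ} {K : Type} [DivisionRing K]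
    (p p' : PGPoint n K) (H H' : PGHyp n K) : Prop :=
  Xor' (PGIncid p H') (PGIncid p' H)

/-- Two flags `(p,H)`, `(p',H')` are *symplectic* (distance 2) if both cross-incidences
hold and the flags are neither equal nor share the point or the hyperplane. -/
def FlagSymplectic {n : ℕ} {K : Type} [DivisionRing K]
    (p p' : PGPoint n K) (H H' : PGHyp n K) : Prop :=
  PGIncid p H' ∧ PGIncid p' H ∧ p ≠ p' ∧ H ≠ H'

/-- Two flags `(p,H)`, `(p',H')` are *opposite* if neither cross-incidence holds. -/
def FlagOpp {n : ℕ} {K : Type} [DivisionRing K]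
    (p p' : PGPoint n K) (H H' : PGHyp n K) : Prop :=
  ¬ PGIncid p H' ∧ ¬ PGIncid p' H

/-- A collineation of `PG(n,K)`, recorded by its (bijective) action on points and on
hyperplanes, preserving incidence. -/
structure PGCollineation (n : ℕ) (K : Type) [DivisionRing K] where
  ptMap : PGPoint n K ≃ PGPoint n K
  hypMap : PGHyp n K ≃ PGHyp n K
  incid_iff : ∀ (p : PGPoint n K) (H : PGHyp n K),
    PGIncid p H ↔ PGIncid (ptMap p) (hypMap H)

/-- A duality of `PG(n,K)`: a bijection from points to hyperplanes together with a
bijection from hyperplanes to points, reversing incidence.  It sends an incident flag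
`(p,H)` to the incident flag `(H^θ, p^θ)`. -/
structure PGDuality (n : ℕ) (K : Type) [DivisionRing K] where
  ptMap : PGPoint n K ≃ PGHyp n K
  hypMap : PGHyp n K ≃ PGPoint n K
  incid_iff : ∀ (p : PGPoint n K) (H : PGHyp n K),
    PGIncid p H ↔ PGIncid (hypMap H) (ptMap p)

/-- Over a division ring, for any submodule `W` and vector `v ∉ W` there is a linear
functional vanishing on `W` but not on `v`. -/
lemma exists_functional_skew {K V : Type*} [DivisionRing K] [AddCommGroup V] [Module K V]
    (W : Submodule K V) {v : V} (hv : v ∉ W) :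
    ∃ f : V →ₗ[K] K, f v ≠ 0 ∧ W ≤ LinearMap.ker f := by
  set vb : V ⧸ W := Submodule.Quotient.mk v with hvb
  have hvb0 : vb ≠ 0 := by
    simpa [hvb, Submodule.Quotient.mk_eq_zero] using hv
  have hli : LinearIndepOn K id ({vb} : Set (V ⧸ W)) :=
    linearIndependent_unique_iff.mpr (by simpa using hvb0)
  let b := Module.Basis.extend hli
  have hmem : vb ∈ hli.extend (Set.subset_univ _) :=
    hli.subset_extend _ rfl
  refine ⟨(b.coord ⟨vb, hmem⟩).comp W.mkQ, ?_, ?_⟩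
  · have hb : b ⟨vb, hmem⟩ = vb := Module.Basis.extend_apply_self hli ⟨vb, hmem⟩
    show (b.coord ⟨vb, hmem⟩) vb ≠ 0
    have h1 : (b.coord ⟨vb, hmem⟩) (b ⟨vb, hmem⟩) = 1 := by simp
    rw [hb] at h1
    rw [h1]
    exact one_ne_zero
  · intro x hx
    simp [LinearMap.mem_ker, (Submodule.Quotient.mk_eq_zero W).mpr hx]

/-- If a collineation `θ` of `PG(n,K)` (`n ≥ 2`) maps no incident
point-hyperplane flag to a special flag, then for every point `p` with `p ≠ p^θ`
the line `p p^θ` is stabilised: `p^{θ²}` lies on the line through `p` and `p^θ`. -/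
theorem stmt_1 (n : ℕ) (hn : 2 ≤ n) (K : Type) [DivisionRing K]
    (θ : PGCollineation n K)
    (hkang : ∀ (p : PGPoint n K) (H : PGHyp n K), PGIncid p H →
      ¬ FlagSpecial p (θ.ptMap p) H (θ.hypMap H)) :
    ∀ p : PGPoint n K, θ.ptMap p ≠ p →
      (θ.ptMap (θ.ptMap p)).submodule ≤ p.submodule ⊔ (θ.ptMap p).submodule := by
  intro p _hp
  by_contra hle
  set W : Submodule K (Fin (n + 1) → K) := p.submodule ⊔ (θ.ptMap p).submodule with hW
  set v : Fin (n + 1) → K := (θ.ptMap (θ.ptMap p)).rep with hv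
  have hvW : v ∉ W := by
    intro hmem
    apply hle
    rw [Projectivization.submodule_eq]
    exact (Submodule.span_singleton_le_iff_mem _ _).mpr hmem
  obtain ⟨f, hfv, hker⟩ := exists_functional_skew W hvW
  -- the kernel of f is a hyperplane
  have hrange : LinearMap.range f = ⊤ := by
    rcases eq_or_ne (LinearMap.range f) ⊥ with h | h
    · exact absurd (by simpa [h] using LinearMap.mem_range_self f v) hfv
    · obtain ⟨x, hx, hx0⟩ := Submodule.exists_mem_ne_zero_of_ne_bot h
      rw [Submodule.eq_top_iff']
      intro c
      have := Submodule.smul_mem (LinearMap.range f) (c * x⁻¹) hx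
      simpa [smul_eq_mul, mul_assoc, inv_mul_cancel₀ hx0] using this
  have hfin : Module.finrank K (LinearMap.ker f) = n := by
    have h1 := LinearMap.finrank_range_add_finrank_ker f
    rw [hrange, Module.finrank_fin_fun] at h1
    have h2 : Module.finrank K (⊤ : Submodule K K) = 1 := by
      simpa using Module.finrank_self K
    omega
  set H : PGHyp n K := ⟨LinearMap.ker f, hfin⟩ with hH
  have hpH : PGIncid p H := le_trans (le_sup_left.trans_eq hW.symm) hker
  have hθpH : PGIncid (θ.ptMap p) H := le_trans (le_sup_right.trans_eq hW.symm) hker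
  -- from the kangaroo condition at (p, H): p ∈ θH
  have h1 : PGIncid p (θ.hypMap H) := by
    have := hkang p H hpH
    unfold FlagSpecial Xor' Xor at this
    tauto
  -- incidence preservation: θp ∈ θH
  have h2 : PGIncid (θ.ptMap p) (θ.hypMap H) := (θ.incid_iff p H).mp hpH
  -- kangaroo at (θp, H): θ²p ∈ H
  have h3 : PGIncid (θ.ptMap (θ.ptMap p)) H := by
    have := hkang (θ.ptMap p) H hθpH
    unfold FlagSpecial Xor' Xor at this
    tauto
  -- contradiction: f v = 0
  have hvker : v ∈ LinearMap.ker f := by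
    apply h3
    rw [Projectivization.submodule_eq]
    exact Submodule.mem_span_singleton_self _
  exact hfv hvker
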